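/- A subset X ⊆ E is independent in the matroid M(W) (i.e. contains no minimal support of W) if and only if there exist j_1,…,j_s ∈ E \ X such that u^{(j_1)},…,u^{(j_s)} are linearly independent in K^s. -/

import Mathlib

/-- `IsCircuit W C` : C is a minimal nonempty support of an element of W. -/
def IsCircuit {K E : Type*} [Field K] (W : Submodule K (E → K)) (C : Set E) : Prop :=
  ∃ w ∈ W, w ≠ 0 ∧ Function.support w = C ∧
    ∀ w' ∈ W, w' ≠ 0 → Function.support w' ⊆ C → Function.support w' = C

section Aux

variable {K E : Type*} [Field K]

/-- Functions with support contained in `A`, as a submodule. -/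
def suppSub (K : Type*) [Field K] {E : Type*} (A : Set E) : Submodule K (E → K) where
  carrier := {v | ∀ j, j ∉ A → v j = 0}
  add_mem' := fun ha hb j hj => by simp [ha j hj, hb j hj]
  zero_mem' := fun j _ => rfl
  smul_mem' := fun c v hv j hj => by simp [hv j hj]

lemma mem_suppSub {A : Set E} {v : E → K} : v ∈ suppSub K A ↔ Function.support v ⊆ A := by
  constructor
  · intro h x hx
    by_contra hA
    exact hx (h x hA)
  · intro h j hj
    by_contra h0
    exact hj (h h0)

lemma exists_circuit_subset (W : Submodule K (E → K)) [FiniteDimensional K W]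
    (w : E → K) (hw : w ∈ W) (h0 : w ≠ 0) :
    ∃ C, IsCircuit W C ∧ C ⊆ Function.support w := by
  suffices key : ∀ n : ℕ, ∀ w : E → K, w ∈ W → w ≠ 0 →
      Module.finrank K ↥(W ⊓ suppSub K (Function.support w)) ≤ n →
      ∃ C, IsCircuit W C ∧ C ⊆ Function.support w by
    exact key _ w hw h0 le_rfl
  intro n
  induction n with
  | zero =>
    intro w hw h0 hr
    exfalso
    haveI : FiniteDimensional K ↥(W ⊓ suppSub K (Function.support w)) :=
      Submodule.finiteDimensional_of_le (inf_le_left)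
    have hmem : w ∈ W ⊓ suppSub K (Function.support w) :=
      ⟨hw, mem_suppSub.2 subset_rfl⟩
    have : W ⊓ suppSub K (Function.support w) = ⊥ := by
      have := Nat.le_zero.1 hr
      exact Submodule.finrank_eq_zero.1 this
    rw [this] at hmem
    exact h0 hmem
  | succ n ih =>
    intro w hw h0 hr
    by_cases hmin : ∀ w' ∈ W, w' ≠ 0 → Function.support w' ⊆ Function.support w →
        Function.support w' = Function.support w
    · exact ⟨Function.support w, ⟨w, hw, h0, rfl, hmin⟩, subset_rfl⟩
    · push_neg at hmin
      obtain ⟨v, hvW, hv0, hvsub, hvne⟩ := hmin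
      haveI : FiniteDimensional K ↥(W ⊓ suppSub K (Function.support w)) :=
        Submodule.finiteDimensional_of_le (inf_le_left)
      have hlt : W ⊓ suppSub K (Function.support v) < W ⊓ suppSub K (Function.support w) := by
        refine lt_of_le_of_ne (inf_le_inf_left _ ?_) ?_
        · intro x hx
          exact mem_suppSub.2 ((mem_suppSub.1 hx).trans hvsub)
        · intro heq
          have hmem : w ∈ W ⊓ suppSub K (Function.support v) := by
            rw [heq]; exact ⟨hw, mem_suppSub.2 subset_rfl⟩
          have hsub : Function.support w ⊆ Function.support v := mem_suppSub.1 hmem.2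
          exact hvne (le_antisymm hvsub hsub)
      have hrv : Module.finrank K ↥(W ⊓ suppSub K (Function.support v)) ≤ n := by
        have := Submodule.finrank_lt_finrank_of_lt hlt
        omega
      obtain ⟨C, hC, hCv⟩ := ih v hvW hv0 hrv
      exact ⟨C, hC, hCv.trans hvsub⟩

end Aux

/-- X ⊆ E is independent in M(W) (contains no minimal support
of W = span{φ_1,…,φ_s}) iff there exist j_1,…,j_s ∈ E \ X such that
u^{(j_1)},…,u^{(j_s)} are linearly independent in K^s. -/
theorem stmt10 {K E : Type*} [Field K] {s : ℕ} (hs : 0 < s)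
    (φ : Fin s → (E → K)) (hφ : LinearIndependent K φ)
    (u : E → (Fin s → K)) (hu : ∀ j i, u j i = φ i j)
    (X : Set E) :
    (∀ C, IsCircuit (Submodule.span K (Set.range φ)) C → ¬ C ⊆ X) ↔
      ∃ j : Fin s → E, (∀ i, j i ∉ X) ∧ LinearIndependent K (u ∘ j) := by
  set W := Submodule.span K (Set.range φ) with hW
  haveI : FiniteDimensional K W := FiniteDimensional.span_of_finite K (Set.finite_range φ)
  haveI : Nonempty (Fin s) := ⟨⟨0, hs⟩⟩
  constructor
  · intro h
    -- Step 1: no nonzero element of W has support inside X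
    have step1 : ∀ w ∈ W, w ≠ 0 → ¬ Function.support w ⊆ X := by
      intro w hw h0 hsupp
      obtain ⟨C, hC, hCw⟩ := exists_circuit_subset W w hw h0
      exact h C hC (hCw.trans hsupp)
    -- Step 2: the vectors u j, j ∉ X, span K^s
    have step2 : Submodule.span K (u '' Xᶜ) = ⊤ := by
      by_contra hne
      obtain ⟨f, hf0, hfmap⟩ := Submodule.exists_dual_map_eq_bot_of_lt_top
        (p := Submodule.span K (u '' Xᶜ)) (lt_top_iff_ne_top.2 hne) inferInstance
      set c : Fin s → K := fun i => f (Pi.single i 1) with hc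
      have hfc : ∀ v, f v = ∑ i, v i * c i := fun v => by
        rw [LinearMap.pi_apply_eq_sum_univ f v]
        refine Finset.sum_congr rfl fun i _ => ?_
        rw [smul_eq_mul]
        have hsingle : (fun j => if i = j then (1:K) else 0) = Pi.single i 1 := by
          funext j
          simp [Pi.single_apply, eq_comm]
        rw [hsingle]
      set w : E → K := ∑ i, c i • φ i with hwdef
      have hwW : w ∈ W := Submodule.sum_mem _ fun i _ =>
        Submodule.smul_mem _ _ (Submodule.subset_span ⟨i, rfl⟩)
      have hwne : w ≠ 0 := by
        intro h0
        apply hf0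
        have hcz : ∀ i, c i = 0 :=
          Fintype.linearIndependent_iff.1 hφ c (by rw [← hwdef, h0])
        ext v
        exact hcz v
      have hsupp : Function.support w ⊆ X := by
        intro j hj
        by_contra hjX
        have hmem : u j ∈ Submodule.span K (u '' Xᶜ) :=
          Submodule.subset_span ⟨j, hjX, rfl⟩
        have hfj : f (u j) = 0 := by
          have : f (u j) ∈ Submodule.map f (Submodule.span K (u '' Xᶜ)) :=
            ⟨u j, hmem, rfl⟩
          rw [hfmap] at this
          exact this
        apply hj
        have : w j = ∑ i, c i * φ i j := by
          rw [hwdef]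
          simp [Finset.sum_apply]
        rw [this, ← hfj, hfc (u j)]
        exact Finset.sum_congr rfl fun i _ => by rw [hu j i, mul_comm]
      exact step1 w hwW hwne hsupp
    -- Step 3: extract s linearly independent vectors
    obtain ⟨t, hts, htspan, htind⟩ := exists_linearIndependent K (u '' Xᶜ)
    rw [step2] at htspan
    have b : Module.Basis t K (Fin s → K) := Module.Basis.mk htind (by rw [Subtype.range_coe, htspan])
    haveI : Fintype t := FiniteDimensional.fintypeBasisIndex b
    have hcard : Fintype.card t = s := by
      have := Module.finrank_eq_card_basis b
      rw [Module.finrank_fintype_fun_eq_card, Fintype.card_fin] at this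
      omega
    have e : Fin s ≃ t := (Fintype.equivFinOfCardEq hcard).symm
    have hchoice : ∀ x : t, ∃ jx : E, jx ∉ X ∧ u jx = (x : Fin s → K) := by
      intro x
      obtain ⟨jx, hjx, hux⟩ := hts x.2
      exact ⟨jx, hjx, hux⟩
    choose g hg1 hg2 using hchoice
    refine ⟨fun i => g (e i), fun i => hg1 _, ?_⟩
    have heq : u ∘ (fun i => g (e i)) = (Subtype.val : t → (Fin s → K)) ∘ e :=
      funext fun i => hg2 (e i)
    rw [heq]
    exact htind.comp e e.injective
  · rintro ⟨j, hjX, hjind⟩ C ⟨w, hwW, hw0, hsupp, -⟩ hCX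
    obtain ⟨c, hcw⟩ := (Submodule.mem_span_range_iff_exists_fun K).1 hwW
    set L : (Fin s → K) →ₗ[K] K := ∑ k, c k • LinearMap.proj k with hL
    have hLv : ∀ v, L v = ∑ k, c k * v k := fun v => by
      simp [hL, smul_eq_mul]
    have span_top : Submodule.span K (Set.range (u ∘ j)) = ⊤ :=
      hjind.span_eq_top_of_card_eq_finrank
        (by rw [Module.finrank_fintype_fun_eq_card, Fintype.card_fin])
    have hLzero : ∀ i, L (u (j i)) = 0 := by
      intro i
      have hns : j i ∉ Function.support w := fun hmem => hjX i (hCX (hsupp ▸ hmem))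
      have hwj : w (j i) = 0 := by
        by_contra hne
        exact hns hne
      rw [hLv]
      rw [← hcw] at hwj
      calc ∑ k, c k * u (j i) k = ∑ k, c k * φ k (j i) := by
            exact Finset.sum_congr rfl fun k _ => by rw [hu (j i) k]
        _ = 0 := by simpa [Finset.sum_apply] using hwj
    have hL0 : L = 0 := by
      have hker : Submodule.span K (Set.range (u ∘ j)) ≤ LinearMap.ker L :=
        Submodule.span_le.2 (by rintro _ ⟨i, rfl⟩; exact hLzero i)
      rw [span_top, top_le_iff] at hker
      exact LinearMap.ext fun v => LinearMap.mem_ker.1 (hker ▸ Submodule.mem_top)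
    have hc0 : c = 0 := by
      funext k
      have := congrArg (fun (M : (Fin s → K) →ₗ[K] K) => M (Pi.single k 1)) hL0
      simpa [hLv, Pi.single_apply, Finset.sum_ite_eq'] using this
    apply hw0
    rw [← hcw, hc0]
    simp
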